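/- If n ≡ 0 (mod 3), then the cycle C_n admits a J-colouring with exactly 3 colours, and its J-colouring number is 3. -/

import Mathlib

open SimpleGraph

/-- A colouring is proper. -/
def ProperColoring {V : Type*} {k : ℕ} (G : SimpleGraph V) (c : V → Fin k) : Prop :=
  ∀ u v, G.Adj u v → c u ≠ c v

/-- Vertex `v` belongs to a rainbow neighbourhood: its closed neighbourhood
contains every colour. -/
def RainbowAt {V : Type*} {k : ℕ} (G : SimpleGraph V) (c : V → Fin k) (v : V) : Prop :=
  ∀ i : Fin k, ∃ u, (u = v ∨ G.Adj v u) ∧ c u = i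

/-- A J-colouring: a proper colouring in which every vertex belongs to a
rainbow neighbourhood. -/
def IsJColoring {V : Type*} {k : ℕ} (G : SimpleGraph V) (c : V → Fin k) : Prop :=
  ProperColoring G c ∧ ∀ v, RainbowAt G c v

lemma val_add_one_mod {m : ℕ} (hdvd : 3 ∣ (m + 3)) (v : Fin (m + 3)) :
    ((v + 1 : Fin (m + 3))).val % 3 = (v.val + 1) % 3 := by
  have : ((v + 1 : Fin (m + 3))).val = (v.val + 1) % (m + 3) := by
    rw [Fin.add_def]
    simp [Fin.val_one]
  rw [this, Nat.mod_mod_of_dvd _ hdvd]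

theorem J_number_cycle_three (n : ℕ) (hn : 3 ≤ n) (h3 : n % 3 = 0) :
    (∃ c : Fin n → Fin 3, IsJColoring (cycleGraph n) c) ∧
      ∀ k : ℕ, 3 < k → ¬ ∃ c : Fin n → Fin k, IsJColoring (cycleGraph n) c := by
  obtain ⟨m, rfl⟩ : ∃ m, n = m + 3 := ⟨n - 3, by omega⟩
  have hdvd : 3 ∣ (m + 3) := Nat.dvd_of_mod_eq_zero h3
  constructor
  · -- existence
    refine ⟨fun v => ⟨v.val % 3, Nat.mod_lt _ (by norm_num)⟩, ?_, ?_⟩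
    · -- proper
      intro u v hadj
      have h := (cycleGraph_adj (n := m + 1)).mp hadj
      have key : ∀ a b : Fin (m + 3), a - b = 1 → a.val % 3 ≠ b.val % 3 := by
        intro a b hab
        have ha : a = b + 1 := by rw [sub_eq_iff_eq_add] at hab; rw [hab]; exact add_comm _ _
        rw [ha, val_add_one_mod hdvd]
        omega
      rcases h with h | h
      · simp only [ne_eq, Fin.mk.injEq]
        exact key u v h
      · simp only [ne_eq, Fin.mk.injEq]
        exact fun hc => key v u h hc.symm
    · -- rainbow
      intro v i
      have adj1 : (cycleGraph (m + 3)).Adj v (v + 1) := by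
        rw [cycleGraph_adj]; right; rw [add_sub_cancel_left]
      have adj2 : (cycleGraph (m + 3)).Adj v (v - 1) := by
        rw [cycleGraph_adj]; left; rw [sub_sub_cancel]
      have hc1 : ((v + 1 : Fin (m + 3))).val % 3 = (v.val % 3 + 1) % 3 := by
        rw [val_add_one_mod hdvd]; omega
      have hveq : (v - 1 : Fin (m + 3)) + 1 = v := sub_add_cancel _ _
      have hc2 : ((v - 1 : Fin (m + 3)).val % 3 + 1) % 3 = v.val % 3 := by
        have h := val_add_one_mod hdvd (v - 1)
        rw [hveq] at h
        omega
      have hia : i.val < 3 := i.isLt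
      have hcase : i.val = v.val % 3 ∨ i.val = (v.val % 3 + 1) % 3 ∨
          i.val = (v - 1 : Fin (m + 3)).val % 3 := by omega
      rcases hcase with h | h | h
      · exact ⟨v, Or.inl rfl, Fin.ext h.symm⟩
      · refine ⟨v + 1, Or.inr adj1, Fin.ext ?_⟩
        show ((v + 1 : Fin (m + 3))).val % 3 = i.val
        omega
      · refine ⟨v - 1, Or.inr adj2, Fin.ext ?_⟩
        show ((v - 1 : Fin (m + 3))).val % 3 = i.val
        omega
  · -- upper bound
    intro k hk ⟨c, _, hrain⟩
    have h := hrain 0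
    choose f hf hc using h
    have hmem : ∀ i, f i ∈ ({0, 1, -1} : Finset (Fin (m + 3))) := by
      intro i
      rcases hf i with h | h
      · simp [h]
      · rw [cycleGraph_adj] at h
        rcases h with h | h
        · rw [zero_sub, neg_eq_iff_eq_neg] at h
          simp [h]
        · rw [sub_zero] at h
          simp [h]
    have hinj : Set.InjOn f ↑(Finset.univ : Finset (Fin k)) := by
      intro i _ j _ hij
      rw [← hc i, ← hc j, hij]
    have hcard := Finset.card_le_card_of_injOn f (fun i _ => hmem i) hinj
    simp only [Finset.card_univ, Fintype.card_fin] at hcard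
    have h1 : ({1, -1} : Finset (Fin (m + 3))).card ≤ 2 :=
      le_trans (Finset.card_insert_le _ _) (by simp)
    have h2 : ({0, 1, -1} : Finset (Fin (m + 3))).card ≤ 3 :=
      le_trans (Finset.card_insert_le _ _) (by omega)
    omega
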